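/- arXiv:1309.3558 — 2 statements merged into one kernel-verified Lean document; each statement's English description precedes it below -/
import Mathlib

section
/- Let K be a finite group, H ≤ K a subgroup containing the commutator subgroup [K,K], and n ≥ 2. Define G_n(K,H) ≤ K ≀ S_n as the subgroup generated by S_n, by Hⁿ, and by all (k₁,…,k_n) ∈ Kⁿ with k₁⋯k_n ∈ H. Then G_n(K,H) = {(k₁,…,k_n)·σ : σ ∈ S_n, k₁⋯k_n ∈ H}, and it is a normal subgroup of K ≀ S_n of index [K:H]. -/
/-- The permutation action of `Equiv.Perm ι` on `ι → K`, by group automorphisms. -/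
def permAut (ι K : Type*) [Group K] : Equiv.Perm ι →* MulAut (ι → K) where
  toFun σ := MulEquiv.arrowCongr σ (MulEquiv.refl K)
  map_one' := rfl
  map_mul' _ _ := rfl

/-- The wreath product `K ≀ Sym(ι) = (ι → K) ⋊ Perm ι`. -/
abbrev WreathProduct (ι K : Type*) [Group K] :=
  SemidirectProduct (ι → K) (Equiv.Perm ι) (permAut ι K)

open scoped commutatorElement

/-- For `[K,K] ≤ H ≤ K` and `n ≥ 2`, the subgroup `G_n(K,H) ≤ K ≀ S_n`
generated by `S_n`, `Hⁿ` and the tuples with product in `H` is exactly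
`{(k₁,…,k_n)·σ : k₁⋯k_n ∈ H}`, and it is normal in `K ≀ S_n` of index `[K:H]`. -/
theorem Gn_description_normal_index (K : Type*) [Group K] [Finite K] (H : Subgroup K)
    (hcomm : ⁅(⊤ : Subgroup K), (⊤ : Subgroup K)⁆ ≤ H) (n : ℕ) (hn : 2 ≤ n)
    (G : Subgroup (WreathProduct (Fin n) K))
    (hG : G = Subgroup.closure
      ({w | w.left = 1} ∪ {w | w.right = 1 ∧ ∀ i, w.left i ∈ H} ∪
        {w | w.right = 1 ∧ (List.ofFn w.left).prod ∈ H})) :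
    (G : Set (WreathProduct (Fin n) K)) = {w | (List.ofFn w.left).prod ∈ H} ∧
      G.Normal ∧ G.index = H.index := by
  -- H is normal
  have hcomm' : ∀ a b : K, ⁅a, b⁆ ∈ H := fun a b =>
    hcomm (Subgroup.commutator_mem_commutator (Subgroup.mem_top a) (Subgroup.mem_top b))
  haveI hHnorm : H.Normal := by
    constructor
    intro h hh g
    have : g * h * g⁻¹ = ⁅g, h⁆ * h := by group
    rw [this]
    exact H.mul_mem (hcomm' g h) hh
  -- the quotient is commutative
  have hmc : ∀ a b : K ⧸ H, a * b = b * a := by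
    intro a b
    obtain ⟨a, rfl⟩ := QuotientGroup.mk_surjective a
    obtain ⟨b, rfl⟩ := QuotientGroup.mk_surjective b
    have : a * b = ⁅a, b⁆ * (b * a) := by group
    rw [← QuotientGroup.mk_mul, this, QuotientGroup.mk_mul, QuotientGroup.mk_mul,
      (QuotientGroup.eq_one_iff _).2 (hcomm' a b), one_mul]
  letI : CommGroup (K ⧸ H) := { (inferInstance : Group (K ⧸ H)) with mul_comm := hmc }
  -- the product homomorphism
  let f₁ : (Fin n → K) →* K ⧸ H :=
    { toFun := fun k => ∏ i, (QuotientGroup.mk (k i) : K ⧸ H)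
      map_one' := by simp
      map_mul' := by intro a b; simp [Finset.prod_mul_distrib] }
  have key : ∀ k : Fin n → K,
      QuotientGroup.mk (List.ofFn k).prod = f₁ k := by
    intro k
    simp only [f₁, MonoidHom.coe_mk, OneHom.coe_mk]
    rw [← List.prod_ofFn (f := fun i => (QuotientGroup.mk (k i) : K ⧸ H))]
    simpa [Function.comp_def] using map_list_prod (QuotientGroup.mk' H) (List.ofFn k)
  let φ : WreathProduct (Fin n) K →* K ⧸ H :=
    SemidirectProduct.lift f₁ 1 (by
      intro σ
      ext k
      simp only [MonoidHom.comp_apply, MulEquiv.coe_toMonoidHom, MulAut.conj_apply,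
        MonoidHom.one_apply, one_mul, inv_one, mul_one, f₁, MonoidHom.coe_mk, OneHom.coe_mk]
      exact Equiv.prod_comp σ.symm fun i => (QuotientGroup.mk (k i) : K ⧸ H))
  have hφ : ∀ w : WreathProduct (Fin n) K,
      φ w = QuotientGroup.mk (List.ofFn w.left).prod := by
    intro w
    conv_lhs => rw [← SemidirectProduct.inl_left_mul_inr_right w]
    rw [map_mul, SemidirectProduct.lift_inl, SemidirectProduct.lift_inr,
      MonoidHom.one_apply, mul_one, key]
  have hker : ∀ w : WreathProduct (Fin n) K, w ∈ φ.ker ↔ (List.ofFn w.left).prod ∈ H := by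
    intro w
    rw [MonoidHom.mem_ker, hφ, QuotientGroup.eq_one_iff]
  -- G = ker φ
  have hGk : G = φ.ker := by
    rw [hG]
    apply le_antisymm
    · rw [Subgroup.closure_le]
      rintro w ((hw | ⟨-, hw⟩) | ⟨-, hw⟩) <;> rw [SetLike.mem_coe, hker]
      · rw [hw]
        simpa [Pi.one_def, List.ofFn_const] using H.one_mem
      · exact Subgroup.list_prod_mem _ (by simpa using fun i => hw i)
      · exact hw
    · intro w hw
      rw [hker] at hw
      rw [← SemidirectProduct.inl_left_mul_inr_right w]
      refine Subgroup.mul_mem _ (Subgroup.subset_closure ?_) (Subgroup.subset_closure ?_)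
      · exact Or.inr ⟨rfl, by simpa using hw⟩
      · exact Or.inl (Or.inl rfl)
  -- φ is surjective
  have hsurj : Function.Surjective φ := by
    intro q
    obtain ⟨k, rfl⟩ := QuotientGroup.mk_surjective q
    have h2 : (0 : ℕ) < n := by omega
    refine ⟨SemidirectProduct.inl (Pi.mulSingle ⟨0, h2⟩ k), ?_⟩
    have : φ (SemidirectProduct.inl (Pi.mulSingle ⟨0, h2⟩ k)) = f₁ (Pi.mulSingle ⟨0, h2⟩ k) :=
      SemidirectProduct.lift_inl _ _ _ _
    rw [this]
    simp only [f₁, MonoidHom.coe_mk, OneHom.coe_mk]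
    rw [Fintype.prod_eq_single (⟨0, h2⟩ : Fin n)
      (fun j hj => by simp [Pi.mulSingle_apply, hj])]
    simp
  subst hGk
  refine ⟨?_, MonoidHom.normal_ker φ, ?_⟩
  · ext w; exact hker w
  · rw [Subgroup.index_ker, MonoidHom.range_eq_top_of_surjective φ hsurj,
      Nat.card_congr Subgroup.topEquiv.toEquiv]
    rfl
end

section
/- Let n ≥ 3, K a finite group, H ≤ K containing [K,K], and consider G = G_n(K,H) ≤ K ≀ S_n acting on (ℂ²)ⁿ via a faithful 2-dimensional representation of K and permutation of factors. Let p = (0, 0, p₃, …, p_n) where p₃,…,p_n ∈ ℂ² \ {0} lie in pairwise distinct K-orbits and have trivial K-stabilizers. Then the stabilizer of p in G, acting on the symplectic complement (ℂ²)² of its fixed space, is isomorphic to G₂(K,H) = G(K,H,id). -/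
variable {ι K V : Type*} [Group K] [AddCommGroup V] [Module ℂ V]

/-- The action of `K ≀ Sym(ι)` on `ι`-tuples of vectors, via a representation `ρ` of `K`
and permutation of the factors. -/
def wrSmul (ρ : K →* (V ≃ₗ[ℂ] V)) (w : WreathProduct ι K) (v : ι → V) : ι → V :=
  fun i => ρ (w.left i) (v (w.right⁻¹ i))

lemma wrSmul_one (ρ : K →* (V ≃ₗ[ℂ] V)) (v : ι → V) : wrSmul ρ 1 v = v := by
  funext i; simp [wrSmul]

lemma wrSmul_mul (ρ : K →* (V ≃ₗ[ℂ] V)) (a b : WreathProduct ι K) (v : ι → V) :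
    wrSmul ρ (a * b) v = wrSmul ρ a (wrSmul ρ b v) := by
  funext i
  simp [wrSmul, SemidirectProduct.mul_left, SemidirectProduct.mul_right, permAut,
    MulEquiv.arrowCongr, mul_inv_rev, Equiv.Perm.mul_apply, Equiv.Perm.inv_def]

/-- The stabilizer in `K ≀ Sym(ι)` of a tuple of vectors. -/
def wrStab (ρ : K →* (V ≃ₗ[ℂ] V)) (p : ι → V) : Subgroup (WreathProduct ι K) where
  carrier := {w | wrSmul ρ w p = p}
  one_mem' := wrSmul_one ρ p
  mul_mem' := by
    intro a b ha hb
    show wrSmul ρ (a * b) p = p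
    rw [wrSmul_mul, hb, ha]
  inv_mem' := by
    intro a ha
    show wrSmul ρ a⁻¹ p = p
    conv_lhs => rw [← ha]
    rw [← wrSmul_mul, inv_mul_cancel, wrSmul_one]


/-! ### Auxiliary machinery for the main theorem -/

open scoped commutatorElement in
theorem aux_normal {K : Type*} [Group K] {H : Subgroup K}
    (hcomm : ⁅(⊤ : Subgroup K), (⊤ : Subgroup K)⁆ ≤ H) : H.Normal := by
  constructor
  intro h hh k
  have h1 : k * h * k⁻¹ * h⁻¹ ∈ H := by
    have : ⁅k, h⁆ ∈ ⁅(⊤ : Subgroup K), (⊤ : Subgroup K)⁆ :=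
      Subgroup.commutator_mem_commutator (Subgroup.mem_top k) (Subgroup.mem_top h)
    simpa [commutatorElement_def] using hcomm this
  simpa using H.mul_mem h1 hh

open scoped commutatorElement in
/-- When `H` contains the commutator subgroup, `K ⧸ H` is commutative. -/
@[reducible]
def auxCommGroup {K : Type*} [Group K] (H : Subgroup K) [H.Normal]
    (hcomm : ⁅(⊤ : Subgroup K), (⊤ : Subgroup K)⁆ ≤ H) : CommGroup (K ⧸ H) where
  __ := QuotientGroup.Quotient.group H
  mul_comm := by
    intro a b
    induction a using QuotientGroup.induction_on with | _ x =>
    induction b using QuotientGroup.induction_on with | _ y =>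
    rw [← QuotientGroup.mk_mul, ← QuotientGroup.mk_mul, QuotientGroup.eq]
    have : ⁅y⁻¹, x⁻¹⁆ ∈ H := hcomm
      (Subgroup.commutator_mem_commutator (Subgroup.mem_top _) (Subgroup.mem_top _))
    simpa [commutatorElement_def, mul_assoc, mul_inv_rev] using this

theorem Equiv.Perm.apply_inv_self {α : Type*} (f : Equiv.Perm α) (x : α) : f (f⁻¹ x) = x :=
  f.apply_symm_apply x

theorem Equiv.Perm.inv_apply_self {α : Type*} (f : Equiv.Perm α) (x : α) : f⁻¹ (f x) = x :=
  f.symm_apply_apply x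

lemma permAut_apply {ι K : Type*} [Group K] (σ : Equiv.Perm ι) (g : ι → K) (i : ι) :
    (permAut ι K σ) g i = g (σ⁻¹ i) := rfl

/-- The "total product" homomorphism from a wreath product to a commutative group. -/
def wrProdHom {ι K : Type*} [Fintype ι] [Group K] {A : Type*} [CommGroup A] (f : K →* A) :
    WreathProduct ι K →* A where
  toFun w := ∏ i, f (w.left i)
  map_one' := by simp [SemidirectProduct.one_left]
  map_mul' a b := by
    simp only [SemidirectProduct.mul_left, Pi.mul_apply, map_mul, Finset.prod_mul_distrib,
      permAut_apply]
    congr 1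
    exact Equiv.prod_comp a.right.symm (fun i => f (b.left i))

lemma wrProdHom_ofFn {m : ℕ} {K : Type*} [Group K] {A : Type*} [CommGroup A] (f : K →* A)
    (w : WreathProduct (Fin m) K) :
    wrProdHom f w = f ((List.ofFn w.left).prod) := by
  rw [map_list_prod, List.map_ofFn, List.prod_ofFn]
  rfl

def finEquiv (n : ℕ) (hn2 : 2 ≤ n) : Fin 2 ≃ {i : Fin n // (i : ℕ) < 2} where
  toFun j := ⟨Fin.castLE hn2 j, j.isLt⟩
  invFun x := ⟨x.1, x.2⟩
  left_inv _ := rfl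
  right_inv _ := rfl

section Ext

variable {n : ℕ} (hn2 : 2 ≤ n)

lemma extendDomain_apply_lt (σ : Equiv.Perm (Fin 2)) {i : Fin n} (h : (i : ℕ) < 2) :
    σ.extendDomain (finEquiv n hn2) i = Fin.castLE hn2 (σ ⟨(i : ℕ), h⟩) := by
  rw [Equiv.Perm.extendDomain_apply_subtype (p := fun j : Fin n => (j : ℕ) < 2) σ
    (finEquiv n hn2) (b := i) h]; rfl

lemma extendDomain_apply_not_lt (σ : Equiv.Perm (Fin 2)) {i : Fin n} (h : ¬ (i : ℕ) < 2) :
    σ.extendDomain (finEquiv n hn2) i = i :=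
  Equiv.Perm.extendDomain_apply_not_subtype _ _ h

lemma extendDomain_inv_apply_lt (σ : Equiv.Perm (Fin 2)) {i : Fin n} (h : (i : ℕ) < 2) :
    (σ.extendDomain (finEquiv n hn2))⁻¹ i = Fin.castLE hn2 (σ⁻¹ ⟨(i : ℕ), h⟩) := by
  rw [Equiv.Perm.inv_def, Equiv.Perm.extendDomain_symm,
    Equiv.Perm.extendDomain_apply_subtype (p := fun j : Fin n => (j : ℕ) < 2) σ.symm
    (finEquiv n hn2) (b := i) h]; rfl

lemma extendDomain_inv_apply_not_lt (σ : Equiv.Perm (Fin 2)) {i : Fin n} (h : ¬ (i : ℕ) < 2) :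
    (σ.extendDomain (finEquiv n hn2))⁻¹ i = i := by
  rw [Equiv.Perm.inv_def, Equiv.Perm.extendDomain_symm]
  exact Equiv.Perm.extendDomain_apply_not_subtype _ _ h

/-- Embedding of `K ≀ S₂` into `K ≀ Sₙ` on the first two coordinates. -/
def wrEmbed {K : Type*} [Group K] :
    WreathProduct (Fin 2) K →* WreathProduct (Fin n) K where
  toFun w := ⟨fun i => if h : (i : ℕ) < 2 then w.left ⟨(i : ℕ), h⟩ else 1,
      w.right.extendDomain (finEquiv n hn2)⟩
  map_one' := by
    ext i
    · simp [SemidirectProduct.one_left]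
    · simp [SemidirectProduct.one_right]
  map_mul' a b := by
    ext i
    · simp only [SemidirectProduct.mul_left, Pi.mul_apply, permAut_apply]
      by_cases h : (i : ℕ) < 2
      · rw [dif_pos h, extendDomain_inv_apply_lt hn2 _ h]
        have h2 : ((Fin.castLE hn2 (a.right⁻¹ ⟨(i : ℕ), h⟩) : Fin n) : ℕ) < 2 :=
          (a.right⁻¹ ⟨(i : ℕ), h⟩).isLt
        rw [dif_pos h, dif_pos h2]
        rfl
      · rw [dif_neg h, extendDomain_inv_apply_not_lt hn2 _ h, dif_neg h, dif_neg h, one_mul]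
    · simp only [SemidirectProduct.mul_right]
      rw [← Equiv.Perm.extendDomain_mul]

lemma wrEmbed_left {K : Type*} [Group K] (w : WreathProduct (Fin 2) K) :
    (wrEmbed hn2 w).left = fun i : Fin n =>
      if h : (i : ℕ) < 2 then w.left ⟨(i : ℕ), h⟩ else 1 := rfl

lemma wrEmbed_right {K : Type*} [Group K] (w : WreathProduct (Fin 2) K) :
    (wrEmbed hn2 w).right = w.right.extendDomain (finEquiv n hn2) := rfl

lemma sdp_ext {N G : Type*} [Group N] [Group G] {φ : G →* MulAut N} {a b : N ⋊[φ] G}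
    (h1 : a.left = b.left) (h2 : a.right = b.right) : a = b := by
  cases a; cases b; cases h1; cases h2; rfl

lemma wrEmbed_injective {K : Type*} [Group K] :
    Function.Injective (wrEmbed hn2 (K := K)) := by
  rw [injective_iff_map_eq_one]
  intro w hw
  have hL : ((wrEmbed hn2) w).left = 1 := by rw [hw]; rfl
  have hR : ((wrEmbed hn2) w).right = 1 := by rw [hw]; rfl
  rw [wrEmbed_right] at hR
  have hr : w.right = 1 := Equiv.Perm.extendDomain_eq_one_iff.mp hR
  have hl : w.left = 1 := by
    funext j
    have h1 := congrFun hL (Fin.castLE hn2 j)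
    rw [wrEmbed_left] at h1
    have hc : ((Fin.castLE hn2 j : Fin n) : ℕ) < 2 := j.isLt
    have h1' : (if h : ((Fin.castLE hn2 j : Fin n) : ℕ) < 2
        then w.left ⟨((Fin.castLE hn2 j : Fin n) : ℕ), h⟩ else 1) = 1 := h1
    rw [dif_pos hc] at h1'
    calc w.left j = w.left ⟨((Fin.castLE hn2 j : Fin n) : ℕ), hc⟩ :=
          congrArg w.left (Fin.ext rfl)
      _ = 1 := h1'
  exact sdp_ext (by rw [hl]; rfl) (by rw [hr]; rfl)

end Ext

/-- For `n ≥ 3` and `G = G_n(K,H) ≤ K ≀ S_n` acting on `(ℂ²)ⁿ` via a faithful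
2-dimensional representation of `K`, the stabilizer of a point `p = (0,0,p₃,…,p_n)` with the
`pᵢ` nonzero, in pairwise distinct free `K`-orbits, is isomorphic to `G₂(K,H) = G(K,H,id)`. -/
theorem stabilizer_isomorphic_G2 (K : Type*) [Group K] [Finite K] (H : Subgroup K)
    (hcomm : ⁅(⊤ : Subgroup K), (⊤ : Subgroup K)⁆ ≤ H) (n : ℕ) (hn : 3 ≤ n)
    (ρ : K →* ((Fin 2 → ℂ) ≃ₗ[ℂ] (Fin 2 → ℂ))) (hρ : Function.Injective ρ)
    (Gn : Subgroup (WreathProduct (Fin n) K))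
    (hGn : Gn = Subgroup.closure
      ({w | w.left = 1} ∪ {w | w.right = 1 ∧ ∀ i, w.left i ∈ H} ∪
        {w | w.right = 1 ∧ (List.ofFn w.left).prod ∈ H}))
    (G2 : Subgroup (WreathProduct (Fin 2) K))
    (hG2 : G2 = Subgroup.closure
      ({w | w.left = 1} ∪ {w | w.right = 1 ∧ w.left 0 ∈ H ∧ w.left 1 ∈ H} ∪
        {w | w.right = 1 ∧ w.left 0 * w.left 1 ∈ H}))
    (p : Fin n → (Fin 2 → ℂ))
    (hp0 : ∀ i : Fin n, (i : ℕ) < 2 → p i = 0)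
    (hpne : ∀ i : Fin n, 2 ≤ (i : ℕ) → p i ≠ 0)
    (hpfree : ∀ i : Fin n, 2 ≤ (i : ℕ) → ∀ k : K, ρ k (p i) = p i → k = 1)
    (hporb : ∀ i j : Fin n, 2 ≤ (i : ℕ) → 2 ≤ (j : ℕ) → i ≠ j →
      ∀ k : K, ρ k (p i) ≠ p j) :
    Nonempty (↥(Gn ⊓ wrStab ρ p) ≃* ↥G2) := by
  haveI hN : H.Normal := aux_normal hcomm
  letI : CommGroup (K ⧸ H) := auxCommGroup H hcomm
  have hn2 : 2 ≤ n := by omega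
  set f := QuotientGroup.mk' H with hf
  -- Gn is the kernel of the total-product homomorphism
  have hGnker : Gn = (wrProdHom (ι := Fin n) f).ker := by
    rw [hGn]
    apply le_antisymm
    · rw [Subgroup.closure_le]
      intro w hw
      rw [SetLike.mem_coe, MonoidHom.mem_ker]
      simp only [Set.mem_union, Set.mem_setOf_eq] at hw
      rcases hw with (h | ⟨-, h⟩) | ⟨-, h⟩
      · show ∏ i, f (w.left i) = 1
        refine Finset.prod_eq_one fun i _ => ?_
        rw [h]
        simp
      · show ∏ i, f (w.left i) = 1
        refine Finset.prod_eq_one fun i _ => ?_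
        exact (QuotientGroup.eq_one_iff _).mpr (h i)
      · rw [wrProdHom_ofFn]
        exact (QuotientGroup.eq_one_iff _).mpr h
    · intro w hw
      rw [MonoidHom.mem_ker, wrProdHom_ofFn] at hw
      have hprodH : (List.ofFn w.left).prod ∈ H := (QuotientGroup.eq_one_iff _).mp hw
      rw [← SemidirectProduct.inl_left_mul_inr_right w]
      refine mul_mem (Subgroup.subset_closure ?_) (Subgroup.subset_closure ?_)
      · exact Set.mem_union_right _ ⟨rfl, hprodH⟩
      · exact Set.mem_union_left _ (Set.mem_union_left _ rfl)
  -- G2 is the kernel of the total-product homomorphism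
  have hprod2 : ∀ w : WreathProduct (Fin 2) K,
      wrProdHom f w = f (w.left 0 * w.left 1) := by
    intro w
    show ∏ i, f (w.left i) = _
    rw [Fin.prod_univ_two, map_mul]
  have hG2ker : G2 = (wrProdHom (ι := Fin 2) f).ker := by
    rw [hG2]
    apply le_antisymm
    · rw [Subgroup.closure_le]
      intro w hw
      rw [SetLike.mem_coe, MonoidHom.mem_ker, hprod2]
      simp only [Set.mem_union, Set.mem_setOf_eq] at hw
      rcases hw with (h | ⟨-, h0, h1⟩) | ⟨-, h⟩
      · rw [h]
        simpa using (QuotientGroup.eq_one_iff (1 : K)).mpr H.one_mem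
      · exact (QuotientGroup.eq_one_iff _).mpr (H.mul_mem h0 h1)
      · exact (QuotientGroup.eq_one_iff _).mpr h
    · intro w hw
      rw [MonoidHom.mem_ker, hprod2] at hw
      have hprodH : w.left 0 * w.left 1 ∈ H := (QuotientGroup.eq_one_iff _).mp hw
      rw [← SemidirectProduct.inl_left_mul_inr_right w]
      refine mul_mem (Subgroup.subset_closure ?_) (Subgroup.subset_closure ?_)
      · exact Set.mem_union_right _ ⟨rfl, hprodH⟩
      · exact Set.mem_union_left _ (Set.mem_union_left _ rfl)
  -- characterization of the stabilizer
  have hstab : ∀ w : WreathProduct (Fin n) K, w ∈ wrStab ρ p ↔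
      ∀ i : Fin n, 2 ≤ (i : ℕ) → w.left i = 1 ∧ w.right i = i := by
    intro w
    constructor
    · intro hw i hi
      have hwi : ρ (w.left i) (p (w.right⁻¹ i)) = p i := congrFun hw i
      have hj : w.right⁻¹ i = i := by
        by_contra hne
        rcases lt_or_ge ((w.right⁻¹ i : Fin n) : ℕ) 2 with h2 | h2
        · exact hpne i hi (by rw [← hwi, hp0 _ h2, map_zero])
        · exact hporb _ i h2 hi hne _ hwi
      rw [hj] at hwi
      refine ⟨hpfree i hi _ hwi, ?_⟩
      rw [Equiv.Perm.inv_def, Equiv.symm_apply_eq] at hj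
      exact hj.symm
    · intro h
      funext i
      show ρ (w.left i) (p (w.right⁻¹ i)) = p i
      rcases lt_or_ge ((i : Fin n) : ℕ) 2 with h2 | h2
      · have hinv : ((w.right⁻¹ i : Fin n) : ℕ) < 2 := by
          by_contra hge
          push_neg at hge
          have h3 := (h _ hge).2
          rw [Equiv.Perm.apply_inv_self] at h3
          rw [← h3] at hge
          omega
        rw [hp0 _ h2, hp0 _ hinv, map_zero]
      · have h1 := (h i h2).1
        have hinv : w.right⁻¹ i = i := by
          rw [Equiv.Perm.inv_def, Equiv.symm_apply_eq]
          exact (h i h2).2.symm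
        rw [hinv, h1, map_one]
        rfl
  -- products of tuples supported on the first two coordinates
  have hprodn : ∀ g : Fin n → K ⧸ H, (∀ i : Fin n, 2 ≤ (i : ℕ) → g i = 1) →
      ∏ i, g i = g ⟨0, by omega⟩ * g ⟨1, by omega⟩ := by
    intro g hg
    have h01 : (⟨0, by omega⟩ : Fin n) ≠ ⟨1, by omega⟩ := by simp [Fin.ext_iff]
    rw [← Finset.prod_pair h01]
    refine (Finset.prod_subset (Finset.subset_univ _) ?_).symm
    intro x _ hx
    apply hg
    simp only [Finset.mem_insert, Finset.mem_singleton, not_or, Fin.ext_iff] at hx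
    omega
  -- the key equality of subgroups
  have hmap : Subgroup.map (wrEmbed hn2) G2 = Gn ⊓ wrStab ρ p := by
    apply le_antisymm
    · intro x hx
      rw [Subgroup.mem_map] at hx
      obtain ⟨w, hw, rfl⟩ := hx
      rw [hG2ker, MonoidHom.mem_ker, hprod2] at hw
      have hL : ∀ i : Fin n, 2 ≤ (i : ℕ) → (wrEmbed hn2 w).left i = 1 := by
        intro i hi
        rw [wrEmbed_left]
        exact dif_neg (by omega)
      rw [Subgroup.mem_inf]
      constructor
      · rw [hGnker, MonoidHom.mem_ker]
        show ∏ i, f ((wrEmbed hn2 w).left i) = 1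
        rw [hprodn _ (fun i hi => by rw [hL i hi, map_one])]
        have e0 : (wrEmbed hn2 w).left ⟨0, by omega⟩ = w.left 0 := by
          have hc : ((⟨0, by omega⟩ : Fin n) : ℕ) < 2 := Nat.zero_lt_two
          simp only [wrEmbed_left, dif_pos hc]
          exact congrArg w.left (Fin.ext rfl)
        have e1 : (wrEmbed hn2 w).left ⟨1, by omega⟩ = w.left 1 := by
          have hc : ((⟨1, by omega⟩ : Fin n) : ℕ) < 2 := Nat.one_lt_two
          simp only [wrEmbed_left, dif_pos hc]
          exact congrArg w.left (Fin.ext rfl)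
        rw [e0, e1, ← map_mul, hw]
      · rw [hstab]
        intro i hi
        refine ⟨hL i hi, ?_⟩
        rw [wrEmbed_right]
        exact extendDomain_apply_not_lt hn2 _ (by omega)
    · intro w hw
      rw [Subgroup.mem_inf] at hw
      obtain ⟨hwGn, hwst⟩ := hw
      have hchar := (hstab w).mp hwst
      have hmem : ∀ j : Fin 2, ((w.right (Fin.castLE hn2 j) : Fin n) : ℕ) < 2 := by
        intro j
        by_contra hge
        push_neg at hge
        have h2 := (hchar _ hge).2
        have h3 := w.right.injective h2
        rw [h3] at hge
        have h4 := j.isLt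
        simp only [Fin.coe_castLE] at hge
        omega
      have hmem' : ∀ j : Fin 2, ((w.right⁻¹ (Fin.castLE hn2 j) : Fin n) : ℕ) < 2 := by
        intro j
        by_contra hge
        push_neg at hge
        have h2 := (hchar _ hge).2
        rw [Equiv.Perm.apply_inv_self] at h2
        rw [← h2] at hge
        have h4 := j.isLt
        simp only [Fin.coe_castLE] at hge
        omega
      let σ₂ : Equiv.Perm (Fin 2) :=
        { toFun := fun j => ⟨(w.right (Fin.castLE hn2 j) : ℕ), hmem j⟩
          invFun := fun j => ⟨(w.right⁻¹ (Fin.castLE hn2 j) : ℕ), hmem' j⟩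
          left_inv := by
            intro j
            apply Fin.ext
            show ((w.right⁻¹ (Fin.castLE hn2
              (⟨(w.right (Fin.castLE hn2 j) : ℕ), hmem j⟩ : Fin 2)) : Fin n) : ℕ) = (j : ℕ)
            have e1 : Fin.castLE hn2
                (⟨(w.right (Fin.castLE hn2 j) : ℕ), hmem j⟩ : Fin 2)
                = w.right (Fin.castLE hn2 j) := Fin.ext rfl
            rw [e1, Equiv.Perm.inv_apply_self, Fin.coe_castLE]
          right_inv := by
            intro j
            apply Fin.ext
            show ((w.right (Fin.castLE hn2
              (⟨(w.right⁻¹ (Fin.castLE hn2 j) : ℕ), hmem' j⟩ : Fin 2)) : Fin n) : ℕ) = (j : ℕ)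
            have e1 : Fin.castLE hn2
                (⟨(w.right⁻¹ (Fin.castLE hn2 j) : ℕ), hmem' j⟩ : Fin 2)
                = w.right⁻¹ (Fin.castLE hn2 j) := Fin.ext rfl
            rw [e1, Equiv.Perm.apply_inv_self, Fin.coe_castLE] }
      set w₂ : WreathProduct (Fin 2) K := ⟨fun j => w.left (Fin.castLE hn2 j), σ₂⟩ with hw₂
      rw [Subgroup.mem_map]
      refine ⟨w₂, ?_, ?_⟩
      · -- membership in G2
        rw [hG2ker, MonoidHom.mem_ker, hprod2]
        rw [hGnker, MonoidHom.mem_ker] at hwGn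
        have h1 : ∏ i, f (w.left i) = 1 := hwGn
        rw [hprodn _ (fun i hi => by rw [(hchar i hi).1, map_one])] at h1
        show f (w.left (Fin.castLE hn2 0) * w.left (Fin.castLE hn2 1)) = 1
        have e0 : Fin.castLE hn2 (0 : Fin 2) = (⟨0, by omega⟩ : Fin n) := Fin.ext rfl
        have e1 : Fin.castLE hn2 (1 : Fin 2) = (⟨1, by omega⟩ : Fin n) := Fin.ext rfl
        rw [e0, e1, map_mul]
        exact h1
      · -- wrEmbed maps it back to w
        have hL2 : (wrEmbed hn2 w₂).left = w.left := by
          funext i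
          simp only [wrEmbed_left]
          by_cases h : (i : ℕ) < 2
          · rw [dif_pos h]
            show w.left (Fin.castLE hn2 (⟨(i : ℕ), h⟩ : Fin 2)) = w.left i
            exact congrArg w.left (Fin.ext rfl)
          · rw [dif_neg h]
            exact ((hchar i (by omega)).1).symm
        have hR2 : (wrEmbed hn2 w₂).right = w.right := by
          apply Equiv.ext
          intro i
          rw [wrEmbed_right]
          by_cases h : (i : ℕ) < 2
          · rw [extendDomain_apply_lt hn2 _ h]
            apply Fin.ext
            show ((w.right (Fin.castLE hn2 (⟨(i : ℕ), h⟩ : Fin 2)) : Fin n) : ℕ)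
              = ((w.right i : Fin n) : ℕ)
            exact congrArg (fun x : Fin n => ((w.right x : Fin n) : ℕ))
              (Fin.ext rfl : Fin.castLE hn2 (⟨(i : ℕ), h⟩ : Fin 2) = i)
          · rw [extendDomain_apply_not_lt hn2 _ h]
            exact ((hchar i (by omega)).2).symm
        exact sdp_ext hL2 hR2
  exact ⟨((Subgroup.equivMapOfInjective G2 (wrEmbed hn2) (wrEmbed_injective hn2)).trans
    (MulEquiv.subgroupCongr hmap)).symm⟩
end
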